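/- Let a < b < c < d be dyadic rationals in [0,1]. Then F_{[a,d]} is generated by F_{[a,c]} together with F_{[b,d]}, i.e. F_{[a,d]} = ⟨F_{[a,c]}, F_{[b,d]}⟩. -/
import Mathlib


noncomputable section

/-- A dyadic rational real number. -/
def IsDyadic (x : ℝ) : Prop := ∃ a : ℤ, ∃ n : ℕ, x = (a : ℝ) / 2 ^ n

/-- `f` restricted to `[p,q]` is a Thompson-like map onto `[r,s]`: piecewise linear with
finitely many breakpoints, all breakpoints dyadic, all slopes integer powers of 2. -/
def ThompsonLike (p q r s : ℝ) (f : ℝ → ℝ) : Prop :=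
  f p = r ∧ f q = s ∧
  ∃ n : ℕ, 0 < n ∧ ∃ x : ℕ → ℝ,
    x 0 = p ∧ x n = q ∧
    (∀ i, i < n → x i < x (i + 1)) ∧
    (∀ i, i ≤ n → IsDyadic (x i)) ∧
    (∀ i, i < n → ∃ k : ℤ, ∀ t ∈ Set.Icc (x i) (x (i + 1)),
      f t = f (x i) + (2 : ℝ) ^ k * (t - x i))

/-- Membership in `F_{[p,q]}`, realised as permutations of `ℝ` that are Thompson-like
self-maps of `[p,q]` and the identity elsewhere. -/
def InF (p q : ℝ) (g : Equiv.Perm ℝ) : Prop :=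
  ThompsonLike p q p q g ∧ ∀ x : ℝ, x ∉ Set.Icc p q → g x = x

/-- The circle `S¹ = ℝ/ℤ`. -/
abbrev Circle1 := AddCircle (1 : ℝ)

instance : Fact ((0 : ℝ) < 1) := ⟨one_pos⟩

/-- A dyadic point of the circle. -/
def IsDyadicC (x : Circle1) : Prop := ∃ t : ℝ, IsDyadic t ∧ x = (t : Circle1)

/-- Membership in Thompson's group `T`, realised as permutations of the circle:
piecewise linear with finitely many breakpoints, all breakpoints dyadic (hence
preserving the dyadic points), and all slopes integer powers of 2. -/
def InT (g : Equiv.Perm Circle1) : Prop :=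
  ∃ n : ℕ, 0 < n ∧ ∃ x y : ℕ → ℝ,
    x n = x 0 + 1 ∧
    (∀ i, i < n → x i < x (i + 1)) ∧
    (∀ i, i ≤ n → IsDyadic (x i)) ∧
    (∀ i, i < n → IsDyadic (y i)) ∧
    (∀ i, i < n → ∃ k : ℤ, ∀ t ∈ Set.Icc (x i) (x (i + 1)),
      g ((t : ℝ) : Circle1) = (((y i + (2 : ℝ) ^ k * (t - x i)) : ℝ) : Circle1))

/-- Membership in `T_{[r,s]}`: elements of `T` that fix pointwise the complement of the
open arc `(r,s)` (arcs described by real lifts with `r < s ≤ r + 1`). -/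
def InTArc (r s : ℝ) (g : Equiv.Perm Circle1) : Prop :=
  InT g ∧ ∀ t : ℝ, t ∈ Set.Icc s (r + 1) → g ((t : ℝ) : Circle1) = ((t : ℝ) : Circle1)

/-- The open arc `(r,s)` of the circle, described by real lifts. -/
def openArc (r s : ℝ) : Set Circle1 := {p | ∃ t : ℝ, r < t ∧ t < s ∧ p = (t : Circle1)}

/-- Rotation of the circle by `a`. -/
def rotC (a : ℝ) : Equiv.Perm Circle1 := Equiv.addRight ((a : ℝ) : Circle1)

/-- The standard generator `x₀` of `F` as a map `[0,1] → [0,1]` (identity off `[0,1]`). -/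
def x0fun : ℝ → ℝ := fun t =>
  if t < 0 then t else if t ≤ 1/4 then 2 * t else if t ≤ 1/2 then t + 1/4
    else if t ≤ 1 then t / 2 + 1/2 else t

/-- The standard generator `x₁` of `F` as a map `[0,1] → [0,1]` (identity off `[0,1]`). -/
def x1fun : ℝ → ℝ := fun t =>
  if t ≤ 1/2 then t else if t ≤ 5/8 then 2 * t - 1/2 else if t ≤ 3/4 then t + 1/8
    else if t ≤ 1 then t / 2 + 1/2 else t

/-- The element `ζ` as a map `[0,1] → [0,1]` (identity off `[0,1]`). -/
def zetaFun : ℝ → ℝ := fun t =>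
  if t < 0 then t else if t ≤ 1/4 then 2 * t else if t ≤ 3/4 then t / 2 + 3/8 else t

/-- A lift `[0,1] → [1/2,3/2]` of the order-3 rotation-like element
`α = (0,10,11) ↦ (10,11,0)` of `T`. -/
def alpha3Fun : ℝ → ℝ := fun t =>
  if t ≤ 1/2 then t / 2 + 1/2 else if t ≤ 3/4 then t + 1/4 else 2 * t - 1/2

namespace ThompsonAux

open Set

lemma dyadic_add {x y : ℝ} (hx : IsDyadic x) (hy : IsDyadic y) : IsDyadic (x + y) := by
  obtain ⟨a, n, rfl⟩ := hx; obtain ⟨b, m, rfl⟩ := hy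
  refine ⟨a * 2 ^ m + b * 2 ^ n, n + m, ?_⟩
  push_cast
  rw [pow_add]
  field_simp
  try ring

lemma dyadic_neg {x : ℝ} (hx : IsDyadic x) : IsDyadic (-x) := by
  obtain ⟨a, n, rfl⟩ := hx
  exact ⟨-a, n, by push_cast; ring⟩

lemma dyadic_sub {x y : ℝ} (hx : IsDyadic x) (hy : IsDyadic y) : IsDyadic (x - y) := by
  rw [sub_eq_add_neg]; exact dyadic_add hx (dyadic_neg hy)

lemma dyadic_mul {x y : ℝ} (hx : IsDyadic x) (hy : IsDyadic y) : IsDyadic (x * y) := by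
  obtain ⟨a, n, rfl⟩ := hx; obtain ⟨b, m, rfl⟩ := hy
  refine ⟨a * b, n + m, ?_⟩
  push_cast
  rw [pow_add]
  field_simp

lemma dyadic_zpow (k : ℤ) : IsDyadic ((2 : ℝ) ^ k) := by
  rcases le_or_gt 0 k with h | h
  · refine ⟨2 ^ k.toNat, 0, ?_⟩
    rw [pow_zero, div_one]
    push_cast
    rw [← zpow_natCast, Int.toNat_of_nonneg h]
  · refine ⟨1, (-k).toNat, ?_⟩
    have hk : (((-k).toNat : ℤ)) = -k := Int.toNat_of_nonneg (by omega)
    push_cast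
    rw [one_div, ← zpow_natCast (2:ℝ) ((-k).toNat), ← zpow_neg]
    congr 1
    omega

lemma dyadic_zpow_mul {x : ℝ} (k : ℤ) (hx : IsDyadic x) : IsDyadic ((2:ℝ) ^ k * x) :=
  dyadic_mul (dyadic_zpow k) hx

lemma dyadic_dense {u v : ℝ} (h : u < v) : ∃ x, IsDyadic x ∧ u < x ∧ x < v := by
  obtain ⟨n, hn⟩ := pow_unbounded_of_one_lt (y := (2:ℝ)) (v - u)⁻¹ one_lt_two
  have h2n : (0:ℝ) < 2 ^ n := by positivity
  have hlt : (1:ℝ) / 2 ^ n < v - u := by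
    rw [div_lt_iff₀ h2n]
    have hvu : 0 < v - u := by linarith
    calc (1:ℝ) = (v-u) * (v-u)⁻¹ := by field_simp
    _ < (v-u) * 2^n := by
        apply mul_lt_mul_of_pos_left hn hvu
  refine ⟨(⌊u * 2 ^ n⌋ + 1) / 2 ^ n, ⟨⌊u * 2 ^ n⌋ + 1, n, by push_cast; ring⟩, ?_, ?_⟩
  · rw [lt_div_iff₀ h2n]
    have := Int.lt_floor_add_one (u * 2 ^ n)
    push_cast
    linarith
  · rw [div_lt_iff₀ h2n]
    have := Int.floor_le (u * 2 ^ n)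
    have : (⌊u * 2 ^ n⌋ : ℝ) + 1 ≤ u * 2 ^ n + 1 := by linarith
    have hv : u * 2 ^ n + 1 < v * 2 ^ n := by
      have := (div_lt_iff₀ h2n).mp hlt
      nlinarith
    push_cast
    linarith

lemma two_zpow_pos (k : ℤ) : (0:ℝ) < 2 ^ k := zpow_pos (by norm_num) k

lemma two_zpow_mul (k l : ℤ) : (2:ℝ) ^ k * 2 ^ l = 2 ^ (k + l) := by
  rw [zpow_add₀ (by norm_num : (2:ℝ) ≠ 0)]

lemma two_zpow_mul_neg (k : ℤ) : (2:ℝ) ^ k * 2 ^ (-k) = 1 := by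
  rw [two_zpow_mul, add_neg_cancel, zpow_zero]

/-- locate a point in a partition -/
lemma exists_piece (x : ℕ → ℝ) : ∀ (n : ℕ), 0 < n → ∀ t : ℝ, x 0 ≤ t → t ≤ x n →
    ∃ i, i < n ∧ x i ≤ t ∧ t ≤ x (i + 1) := by
  intro n
  induction n with
  | zero => intro h; omega
  | succ m ih =>
    intro _ t h0 h1
    rcases Nat.eq_zero_or_pos m with rfl | hm
    · exact ⟨0, by omega, h0, h1⟩
    rcases le_or_gt t (x m) with h | h
    · obtain ⟨i, hi, h2, h3⟩ := ih hm t h0 h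
      exact ⟨i, by omega, h2, h3⟩
    · exact ⟨m, by omega, le_of_lt h, h1⟩

end ThompsonAux

namespace ThompsonAux
open Set

structure TLD (p q r s : ℝ) (f : ℝ → ℝ) : Type where
  fp : f p = r
  fq : f q = s
  n : ℕ
  npos : 0 < n
  x : ℕ → ℝ
  x0 : x 0 = p
  xn : x n = q
  mono : ∀ i, i < n → x i < x (i + 1)
  dyad : ∀ i, i ≤ n → IsDyadic (x i)
  k : ℕ → ℤ
  piece : ∀ i, i < n → ∀ t ∈ Set.Icc (x i) (x (i + 1)),
      f t = f (x i) + (2 : ℝ) ^ (k i) * (t - x i)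

variable {p q r s u v w : ℝ} {f g : ℝ → ℝ}

lemma TLD.toTL (h : TLD p q r s f) : ThompsonLike p q r s f :=
  ⟨h.fp, h.fq, h.n, h.npos, h.x, h.x0, h.xn, h.mono, h.dyad,
    fun i hi => ⟨h.k i, h.piece i hi⟩⟩

noncomputable def _root_.ThompsonLike.tld (h : ThompsonLike p q r s f) : TLD p q r s f := by
  choose fp fq n npos x x0 xn mono dyad piece using h
  exact ⟨fp, fq, n, npos, x, x0, xn, mono, dyad,
    fun i => if hi : i < n then (piece i hi).choose else 0,
    fun i hi => by simpa [hi] using (piece i hi).choose_spec⟩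

/-- partition is monotone -/
lemma TLD.x_mono (h : TLD p q r s f) {i j : ℕ} (hij : i ≤ j) (hj : j ≤ h.n) :
    h.x i ≤ h.x j := by
  induction j with
  | zero => simp_all
  | succ m ih =>
    rcases Nat.eq_or_lt_of_le hij with rfl | hlt
    · exact le_refl _
    · exact le_trans (ih (by omega) (by omega)) (le_of_lt (h.mono m (by omega)))

lemma TLD.pq (h : TLD p q r s f) : p < q := by
  have := h.x_mono (le_refl 0)
  have h2 : h.x 0 < h.x h.n := by
    rcases Nat.exists_eq_add_of_lt h.npos with ⟨m, hm⟩
    calc h.x 0 < h.x 1 := h.mono 0 h.npos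
    _ ≤ h.x h.n := h.x_mono (by omega) (le_refl _)
  rwa [h.x0, h.xn] at h2

/-- reflects order -/
lemma TLD.x_lt_imp (h : TLD p q r s f) {i j : ℕ} (hi : i ≤ h.n) (hj : j ≤ h.n)
    (hlt : h.x i < h.x j) : i < j := by
  by_contra hc
  exact absurd (h.x_mono (by omega : j ≤ i) hi) (not_le.mpr hlt)

lemma TLD.anchor_dyad (h : TLD p q r s f) (hr : IsDyadic r) :
    ∀ i, i ≤ h.n → IsDyadic (f (h.x i)) := by
  intro i
  induction i with
  | zero => intro _; rw [h.x0, h.fp]; exact hr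
  | succ m ih =>
    intro hm
    have hmn : m < h.n := by omega
    have := h.piece m hmn (h.x (m+1)) ⟨le_of_lt (h.mono m hmn), le_refl _⟩
    rw [this]
    exact dyadic_add (ih (by omega))
      (dyadic_zpow_mul _ (dyadic_sub (h.dyad _ hm) (h.dyad _ (by omega))))

lemma TLD.strictMonoOn_piece (h : TLD p q r s f) {i : ℕ} (hi : i < h.n) :
    StrictMonoOn f (Icc (h.x i) (h.x (i+1))) := by
  intro t1 h1 t2 h2 hlt
  rw [h.piece i hi t1 h1, h.piece i hi t2 h2]
  have := two_zpow_pos (h.k i)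
  nlinarith

lemma strictMonoOn_glue {α β γ : ℝ} (hab : α ≤ β) (hbc : β ≤ γ)
    (h1 : StrictMonoOn f (Icc α β)) (h2 : StrictMonoOn f (Icc β γ)) :
    StrictMonoOn f (Icc α γ) := by
  intro t1 ht1 t2 ht2 hlt
  rcases le_or_gt t2 β with h' | h'
  · exact h1 ⟨ht1.1, by linarith⟩ ⟨ht2.1, h'⟩ hlt
  rcases le_or_gt t1 β with h'' | h''
  · rcases eq_or_lt_of_le h'' with rfl | h3
    · exact h2 ⟨le_refl _, hbc⟩ ⟨le_of_lt h', ht2.2⟩ hlt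
    · calc f t1 < f β := h1 ⟨ht1.1, h''⟩ ⟨hab, le_refl _⟩ h3
      _ ≤ f t2 := by
          rcases eq_or_lt_of_le (le_of_lt h') with rfl | h4
          · exact le_refl _
          · exact le_of_lt (h2 ⟨le_refl _, hbc⟩ ⟨le_of_lt h', ht2.2⟩ h')
  · exact h2 ⟨le_of_lt h'', ht1.2⟩ ⟨by linarith, ht2.2⟩ hlt

lemma TLD.strictMonoOn (h : TLD p q r s f) : StrictMonoOn f (Icc p q) := by
  have key : ∀ m, m ≤ h.n → StrictMonoOn f (Icc (h.x 0) (h.x m)) := by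
    intro m
    induction m with
    | zero => intro _ t1 ht1 t2 ht2 hlt; exfalso
              have := ht1.1; have := ht1.2; have := ht2.1; have := ht2.2; linarith
    | succ m ih =>
      intro hm
      exact strictMonoOn_glue (h.x_mono (by omega) (by omega))
        (le_of_lt (h.mono m (by omega))) (ih (by omega)) (h.strictMonoOn_piece (by omega))
  have := key h.n (le_refl _)
  rwa [h.x0, h.xn] at this

lemma TLD.rs (h : TLD p q r s f) : r < s := by
  have := h.strictMonoOn ⟨le_refl p, le_of_lt h.pq⟩ ⟨le_of_lt h.pq, le_refl q⟩ h.pq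
  rwa [h.fp, h.fq] at this

lemma TLD.mapsTo (h : TLD p q r s f) {t : ℝ} (ht : t ∈ Icc p q) : f t ∈ Icc r s := by
  constructor
  · rw [← h.fp]
    rcases eq_or_lt_of_le ht.1 with rfl | hlt
    · exact le_refl _
    · exact le_of_lt (h.strictMonoOn ⟨le_refl _, le_of_lt h.pq⟩ ht hlt)
  · rw [← h.fq]
    rcases eq_or_lt_of_le ht.2 with rfl | hlt
    · exact le_refl _
    · exact le_of_lt (h.strictMonoOn ht ⟨le_of_lt h.pq, le_refl _⟩ hlt)

lemma TLD.locate (h : TLD p q r s f) {t : ℝ} (ht : t ∈ Icc p q) :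
    ∃ i, i < h.n ∧ h.x i ≤ t ∧ t ≤ h.x (i+1) := by
  apply exists_piece h.x h.n h.npos
  · rw [h.x0]; exact ht.1
  · rw [h.xn]; exact ht.2

lemma TLD.dyadic_map (h : TLD p q r s f) (hr : IsDyadic r) {t : ℝ}
    (ht : t ∈ Icc p q) (hdt : IsDyadic t) : IsDyadic (f t) := by
  obtain ⟨i, hi, h1, h2⟩ := h.locate ht
  rw [h.piece i hi t ⟨h1, h2⟩]
  exact dyadic_add (h.anchor_dyad hr i (by omega))
    (dyadic_zpow_mul _ (dyadic_sub hdt (h.dyad i (by omega))))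

lemma TLD.dyadic_preimage (h : TLD p q r s f) (hr : IsDyadic r) {t : ℝ}
    (ht : t ∈ Icc p q) (hdt : IsDyadic (f t)) : IsDyadic t := by
  obtain ⟨i, hi, h1, h2⟩ := h.locate ht
  have hp := h.piece i hi t ⟨h1, h2⟩
  have : t = h.x i + (2:ℝ) ^ (-(h.k i)) * (f t - f (h.x i)) := by
    rw [hp]
    have := two_zpow_mul_neg (h.k i)
    ring_nf
    nlinarith [two_zpow_mul (h.k i) (-(h.k i))]
  rw [this]
  exact dyadic_add (h.dyad i (by omega))
    (dyadic_zpow_mul _ (dyadic_sub hdt (h.anchor_dyad hr i (by omega))))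

lemma TLD.surjOn (h : TLD p q r s f) {y : ℝ} (hy : y ∈ Icc r s) :
    ∃ t ∈ Icc p q, f t = y := by
  have h0 : f (h.x 0) = r := by rw [h.x0, h.fp]
  have hn : f (h.x h.n) = s := by rw [h.xn, h.fq]
  obtain ⟨i, hi, h1, h2⟩ := exists_piece (fun j => f (h.x j)) h.n h.npos y
    (by show f (h.x 0) ≤ y; rw [h0]; exact hy.1)
    (by show y ≤ f (h.x h.n); rw [hn]; exact hy.2)
  set Δ := (2:ℝ) ^ (-(h.k i)) * (y - f (h.x i)) with hΔ
  have hk := two_zpow_pos (h.k i)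
  have hknn := two_zpow_pos (-(h.k i))
  have hmul := two_zpow_mul_neg (h.k i)
  have hfx : f (h.x (i+1)) = f (h.x i) + 2 ^ (h.k i) * (h.x (i+1) - h.x i) :=
    h.piece i hi _ ⟨le_of_lt (h.mono i hi), le_refl _⟩
  refine ⟨h.x i + Δ, ⟨?_, ?_⟩, ?_⟩
  · have : 0 ≤ Δ := by
      apply mul_nonneg (le_of_lt hknn); linarith [h1]
    have hx0 : p ≤ h.x i := by
      have := h.x_mono (Nat.zero_le i) (le_of_lt hi); rwa [h.x0] at this
    linarith
  · have hΔle : Δ ≤ h.x (i+1) - h.x i := by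
      rw [hΔ]
      have : y - f (h.x i) ≤ 2 ^ (h.k i) * (h.x (i+1) - h.x i) := by linarith [h2, hfx.symm ▸ h2]
      calc (2:ℝ) ^ (-(h.k i)) * (y - f (h.x i))
          ≤ 2 ^ (-(h.k i)) * (2 ^ (h.k i) * (h.x (i+1) - h.x i)) := by
            apply mul_le_mul_of_nonneg_left this (le_of_lt hknn)
      _ = h.x (i+1) - h.x i := by
            rw [← mul_assoc, mul_comm ((2:ℝ) ^ (-(h.k i))), hmul, one_mul]
    have hxn : h.x (i+1) ≤ q := by
      have := h.x_mono (show i+1 ≤ h.n by omega) (le_refl _); rwa [h.xn] at this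
    linarith
  · have hin : h.x i + Δ ∈ Icc (h.x i) (h.x (i+1)) := by
      constructor
      · have : 0 ≤ Δ := mul_nonneg (le_of_lt hknn) (by linarith [h1])
        linarith
      · have hΔle : Δ ≤ h.x (i+1) - h.x i := by
          rw [hΔ]
          have hy2 : y - f (h.x i) ≤ 2 ^ (h.k i) * (h.x (i+1) - h.x i) := by
            have := hfx; linarith [h2]
          calc (2:ℝ) ^ (-(h.k i)) * (y - f (h.x i))
              ≤ 2 ^ (-(h.k i)) * (2 ^ (h.k i) * (h.x (i+1) - h.x i)) :=
                mul_le_mul_of_nonneg_left hy2 (le_of_lt hknn)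
          _ = h.x (i+1) - h.x i := by
                rw [← mul_assoc, mul_comm ((2:ℝ) ^ (-(h.k i))), hmul, one_mul]
        linarith
    rw [h.piece i hi _ hin, hΔ, add_sub_cancel_left, ← mul_assoc, hmul, one_mul]
    ring

end ThompsonAux

namespace ThompsonAux
open Set Filter Topology

variable {p q r s u v w : ℝ} {f g : ℝ → ℝ}

lemma continuousOn_union_closed {s t : Set ℝ} (hs : IsClosed s) (ht : IsClosed t)
    (h1 : ContinuousOn f s) (h2 : ContinuousOn f t) : ContinuousOn f (s ∪ t) := by
  intro x hx
  by_cases hxs : x ∈ s <;> by_cases hxt : x ∈ t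
  · exact (h1 x hxs).union (h2 x hxt)
  · have hb : 𝓝[t] x = ⊥ := by
      by_contra hne
      have : (𝓝[t] x).NeBot := ⟨hne⟩
      have := mem_closure_iff_nhdsWithin_neBot.mpr this
      rw [ht.closure_eq] at this
      exact hxt this
    show Filter.Tendsto f (𝓝[s ∪ t] x) (𝓝 (f x))
    rw [nhdsWithin_union, hb, sup_bot_eq]
    exact h1 x hxs
  · have hb : 𝓝[s] x = ⊥ := by
      by_contra hne
      have : (𝓝[s] x).NeBot := ⟨hne⟩
      have := mem_closure_iff_nhdsWithin_neBot.mpr this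
      rw [hs.closure_eq] at this
      exact hxs this
    show Filter.Tendsto f (𝓝[s ∪ t] x) (𝓝 (f x))
    rw [nhdsWithin_union, hb, bot_sup_eq]
    exact h2 x hxt
  · exact absurd hx (by simp [hxs, hxt])

lemma TLD.continuousOn (h : TLD p q r s f) : ContinuousOn f (Icc p q) := by
  have piece : ∀ i, i < h.n → ContinuousOn f (Icc (h.x i) (h.x (i+1))) := by
    intro i hi
    apply ContinuousOn.congr (f := fun t => f (h.x i) + (2:ℝ) ^ (h.k i) * (t - h.x i))
    · apply Continuous.continuousOn; continuity
    · intro t ht; exact h.piece i hi t ht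
  have key : ∀ m, m ≤ h.n → ContinuousOn f (Icc (h.x 0) (h.x m)) := by
    intro m
    induction m with
    | zero => intro _; rw [Set.Icc_self]; exact continuousOn_singleton f _
    | succ m ih =>
      intro hm
      have hu : Icc (h.x 0) (h.x (m+1)) = Icc (h.x 0) (h.x m) ∪ Icc (h.x m) (h.x (m+1)) := by
        rw [Set.Icc_union_Icc_eq_Icc (h.x_mono (Nat.zero_le m) (by omega))
          (le_of_lt (h.mono m (by omega)))]
      rw [hu]
      exact continuousOn_union_closed isClosed_Icc isClosed_Icc (ih (by omega))
        (piece m (by omega))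
  have := key h.n (le_refl _)
  rwa [h.x0, h.xn] at this

noncomputable def TLD.breaks (h : TLD p q r s f) : Finset ℝ :=
  (Finset.range (h.n+1)).image h.x

lemma TLD.breaks_dyad (h : TLD p q r s f) : ∀ y ∈ h.breaks, IsDyadic y := by
  intro y hy
  obtain ⟨i, hi, rfl⟩ := Finset.mem_image.mp hy
  exact h.dyad i (by have := Finset.mem_range.mp hi; omega)

lemma TLD.window (h : TLD p q r s f) {t : ℝ} (ht1 : p < t) (ht2 : t < q)
    (hts : t ∉ h.breaks) :
    ∃ k : ℤ, ∃ ε : ℝ, 0 < ε ∧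
      ∀ s', t - ε ≤ s' → s' ≤ t + ε → f s' = f t + (2:ℝ) ^ k * (s' - t) := by
  obtain ⟨i, hi, h1, h2⟩ := h.locate ⟨le_of_lt ht1, le_of_lt ht2⟩
  have hne1 : h.x i ≠ t := by
    intro he; exact hts (Finset.mem_image.mpr ⟨i, Finset.mem_range.mpr (by omega), he⟩)
  have hne2 : h.x (i+1) ≠ t := by
    intro he; exact hts (Finset.mem_image.mpr ⟨i+1, Finset.mem_range.mpr (by omega), he⟩)
  have h1' : h.x i < t := lt_of_le_of_ne h1 hne1
  have h2' : t < h.x (i+1) := lt_of_le_of_ne h2 (Ne.symm hne2)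
  refine ⟨h.k i, min (t - h.x i) (h.x (i+1) - t), by simp [h1', h2'], ?_⟩
  intro s' hs1 hs2
  have hin : s' ∈ Icc (h.x i) (h.x (i+1)) := by
    constructor
    · have := min_le_left (t - h.x i) (h.x (i+1) - t); linarith
    · have := min_le_right (t - h.x i) (h.x (i+1) - t); linarith
  rw [h.piece i hi s' hin, h.piece i hi t ⟨h1, h2⟩]
  ring

lemma affine_eq_params {m1 m2 c1 c2 α β : ℝ} (hab : α < β)
    (h : ∀ s, α < s → s < β → m1 * s + c1 = m2 * s + c2) : m1 = m2 ∧ c1 = c2 := by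
  have h1 := h (α + (β-α)/3) (by linarith) (by linarith)
  have h2 := h (α + 2*(β-α)/3) (by linarith) (by linarith)
  have hd : (m1 - m2) * ((β - α)/3) = 0 := by linear_combination h2 - h1
  have hm : m1 = m2 := by
    rcases mul_eq_zero.mp hd with h' | h'
    · linarith
    · exfalso; have : β - α > 0 := by linarith
      linarith
  refine ⟨hm, ?_⟩
  rw [hm] at h1
  linarith

lemma affine_piece {f : ℝ → ℝ} {p q u v : ℝ} (hpu : p ≤ u) (huv : u < v) (hvq : v ≤ q)
    (hcont : ContinuousOn f (Icc p q))
    (hloc : ∀ t, u < t → t < v → ∃ k : ℤ, ∃ ε : ℝ, 0 < ε ∧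
      ∀ s', t - ε ≤ s' → s' ≤ t + ε → f s' = f t + (2:ℝ) ^ k * (s' - t)) :
    ∃ k : ℤ, ∀ t ∈ Icc u v, f t = f u + (2:ℝ) ^ k * (t - u) := by
  set t0 := (u+v)/2 with ht0def
  have ht0u : u < t0 := by rw [ht0def]; linarith
  have ht0v : t0 < v := by rw [ht0def]; linarith
  obtain ⟨k0, ε0, hε0, hw0⟩ := hloc t0 ht0u ht0v
  set L : ℝ → ℝ := fun s => (2:ℝ)^k0 * s + (f t0 - 2^k0 * t0) with hLdef
  have hLt0 : ∀ s, f t0 + 2^k0 * (s - t0) = L s := by intro s; rw [hLdef]; ring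
  set A : Set ℝ := {t | ∃ δ : ℝ, 0 < δ ∧ ∀ s, |s - t| < δ → u < s → s < v → f s = L s}
    with hAdef
  have hAopen : IsOpen A := by
    rw [Metric.isOpen_iff]
    rintro t ⟨δ, hδ, hA⟩
    refine ⟨δ/2, by linarith, ?_⟩
    intro t' ht'
    have htt' : |t' - t| < δ/2 := by rw [← Real.dist_eq]; exact ht'
    refine ⟨δ/2, by linarith, fun s hs hsu hsv => hA s ?_ hsu hsv⟩
    calc |s - t| = |(s - t') + (t' - t)| := by ring_nf
    _ ≤ |s - t'| + |t' - t| := abs_add_le _ _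
    _ < δ/2 + δ/2 := by exact add_lt_add hs htt'
    _ = δ := by ring
  have hne : (Ioo u v ∩ A).Nonempty := by
    refine ⟨t0, ⟨ht0u, ht0v⟩, ε0, hε0, ?_⟩
    intro s hs _ _
    rw [← hLt0 s]
    apply hw0 <;> [skip; skip] <;> cases' abs_sub_lt_iff.mp hs with h1 h2 <;> linarith
  have hcl : closure A ∩ Ioo u v ⊆ A := by
    rintro t ⟨htc, htu, htv⟩
    obtain ⟨k, ε, hε, hw⟩ := hloc t htu htv
    set ρ := min ε (min (v - t) (t - u)) / 2 with hρdef
    have hρε : ρ ≤ ε/2 := by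
      rw [hρdef]; have := min_le_left ε (min (v - t) (t - u)); linarith
    have hρv : ρ ≤ (v - t)/2 := by
      rw [hρdef]
      have h1 := min_le_right ε (min (v - t) (t - u))
      have h2 := min_le_left (v - t) (t - u)
      linarith
    have hρu : ρ ≤ (t - u)/2 := by
      rw [hρdef]
      have h1 := min_le_right ε (min (v - t) (t - u))
      have h2 := min_le_right (v - t) (t - u)
      linarith
    have hρpos : 0 < ρ := by
      rw [hρdef]
      have : 0 < min ε (min (v - t) (t - u)) := by
        apply lt_min hε; apply lt_min <;> linarith
      linarith
    obtain ⟨t', ht'A, ht'd⟩ := Metric.mem_closure_iff.mp htc ρ hρpos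
    obtain ⟨δ', hδ', ht'w⟩ := ht'A
    have htt' : |t - t'| < ρ := by rw [← Real.dist_eq]; exact ht'd
    have htt'1 : t - ρ < t' := by cases' abs_sub_lt_iff.mp htt' with h1 h2; linarith
    have htt'2 : t' < t + ρ := by cases' abs_sub_lt_iff.mp htt' with h1 h2; linarith
    set α := max (max (t - ε) u) (t' - δ') with hα
    set β := min (min (t + ε) v) (t' + δ') with hβ
    have hαt' : α < t' := by
      rw [hα]
      apply max_lt (max_lt ?_ ?_) (by linarith)
      · linarith
      · linarith
    have hβt' : t' < β := by
      rw [hβ]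
      apply lt_min (lt_min ?_ ?_) (by linarith)
      · linarith
      · linarith
    have hαβ : α < β := lt_trans hαt' hβt'
    have hJboth : ∀ s1, α < s1 → s1 < β →
        (2:ℝ)^k * s1 + (f t - 2^k * t) = (2:ℝ)^k0 * s1 + (f t0 - 2^k0 * t0) := by
      intro s1 h1 h2
      have hα1 : t - ε < s1 := lt_of_le_of_lt (le_trans (le_max_left _ _) (le_max_left _ _)) h1
      have hα2 : u < s1 := lt_of_le_of_lt (le_trans (le_max_right _ _) (le_max_left _ _)) h1
      have hα3 : t' - δ' < s1 := lt_of_le_of_lt (le_max_right _ _) h1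
      have hβ1 : s1 < t + ε := lt_of_lt_of_le h2 (le_trans (min_le_left _ _) (le_trans (min_le_left _ _) (le_refl _)))
      have hβ2 : s1 < v := lt_of_lt_of_le h2 (le_trans (min_le_left _ _) (min_le_right _ _))
      have hβ3 : s1 < t' + δ' := lt_of_lt_of_le h2 (min_le_right _ _)
      have e1 : f s1 = f t + 2^k * (s1 - t) := hw s1 (by linarith) (by linarith)
      have e2 : f s1 = L s1 := ht'w s1 (abs_sub_lt_iff.mpr ⟨by linarith, by linarith⟩) hα2 hβ2
      have : f t + 2^k * (s1 - t) = L s1 := by rw [← e1, e2]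
      rw [hLdef] at this
      simp only at this
      linarith [this]
    obtain ⟨hm, hc⟩ := affine_eq_params hαβ hJboth
    refine ⟨ε, hε, fun s hs hsu hsv => ?_⟩
    have habs := abs_sub_lt_iff.mp hs
    rw [hw s (by linarith [habs.2]) (by linarith [habs.1]), hLdef]
    simp only
    have : (2:ℝ)^k * s + (f t - 2^k * t) = (2:ℝ)^k0 * s + (f t0 - 2^k0 * t0) := by
      rw [hc, hm]
    linarith [this]
  have hsub : Ioo u v ⊆ A :=
    (isPreconnected_Ioo).subset_of_closure_inter_subset hAopen hne hcl
  have hIoo : ∀ t ∈ Ioo u v, f t = L t := by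
    intro t ht
    obtain ⟨δ, hδ, hA⟩ := hsub ht
    exact hA t (by rw [sub_self, abs_zero]; exact hδ) ht.1 ht.2
  have hend : ∀ e, e ∈ Icc u v → e ∈ closure (Ioo u v) → f e = L e := by
    intro e he hecl
    have hne' : (𝓝[Ioo u v] e).NeBot := mem_closure_iff_nhdsWithin_neBot.mp hecl
    have h1 : Tendsto f (𝓝[Ioo u v] e) (𝓝 (f e)) := by
      apply (hcont e ⟨le_trans hpu he.1, le_trans he.2 hvq⟩).mono
      intro z hz
      exact ⟨le_trans hpu (le_of_lt hz.1), le_trans (le_of_lt hz.2) hvq⟩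
    have h2 : Tendsto L (𝓝[Ioo u v] e) (𝓝 (L e)) := by
      apply Continuous.continuousWithinAt
      rw [hLdef]
      exact (continuous_const.mul continuous_id).add continuous_const
    have h3 : Tendsto f (𝓝[Ioo u v] e) (𝓝 (L e)) := by
      apply Filter.Tendsto.congr' _ h2
      filter_upwards [self_mem_nhdsWithin] with z hz
      exact (hIoo z hz).symm
    exact tendsto_nhds_unique h1 h3
  have hIcc : ∀ t ∈ Icc u v, f t = L t := fun t ht =>
    hend t ht (by rw [closure_Ioo (ne_of_lt huv)]; exact ht)
  refine ⟨k0, fun t ht => ?_⟩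
  rw [hIcc t ht, hIcc u ⟨le_refl u, le_of_lt huv⟩, hLdef]
  simp only
  ring

end ThompsonAux

namespace ThompsonAux
open Set Filter Topology

variable {p q r s u v w : ℝ} {f g : ℝ → ℝ}

lemma TLD.concat (h1 : TLD p q r s f) (h2 : TLD q w s v f) : ThompsonLike p w r v f := by
  refine ⟨h1.fp, h2.fq, h1.n + h2.n, by have := h1.npos; omega,
    fun i => if i ≤ h1.n then h1.x i else h2.x (i - h1.n), ?_, ?_, ?_, ?_, ?_⟩
  · simp [h1.x0]
  · have h2n := h2.npos
    by_cases hh : h1.n + h2.n ≤ h1.n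
    · exact absurd hh (by omega)
    · simp only [if_neg hh]
      rw [Nat.add_sub_cancel_left, h2.xn]
  · intro i hi
    by_cases hi1 : i + 1 ≤ h1.n
    · simp only [if_pos (by omega : i ≤ h1.n), if_pos hi1]
      exact h1.mono i (by omega)
    · by_cases hi0 : i ≤ h1.n
      · have : i = h1.n := by omega
        subst this
        simp only [if_pos (le_refl _), if_neg hi1]
        have e1 : h2.x (h1.n + 1 - h1.n) = h2.x 1 := by congr 1; omega
        rw [h1.xn, e1]
        have hm := h2.mono 0 (by have := h2.npos; omega)
        rwa [h2.x0] at hm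
      · simp only [if_neg hi0, if_neg hi1]
        have e1 : i + 1 - h1.n = (i - h1.n) + 1 := by omega
        rw [e1]
        exact h2.mono (i - h1.n) (by omega)
  · intro i hi
    by_cases hi0 : i ≤ h1.n
    · simp only [if_pos hi0]; exact h1.dyad i hi0
    · simp only [if_neg hi0]; exact h2.dyad (i - h1.n) (by omega)
  · intro i hi
    by_cases hi1 : i + 1 ≤ h1.n
    · simp only [if_pos (by omega : i ≤ h1.n), if_pos hi1]
      exact ⟨h1.k i, h1.piece i (by omega)⟩
    · by_cases hi0 : i ≤ h1.n
      · have : i = h1.n := by omega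
        subst this
        simp only [if_pos (le_refl _), if_neg hi1]
        have e1 : h2.x (h1.n + 1 - h1.n) = h2.x 1 := by congr 1; omega
        rw [h1.xn, e1]
        have hm := h2.piece 0 (by have := h2.npos; omega)
        rw [h2.x0] at hm
        exact ⟨h2.k 0, hm⟩
      · simp only [if_neg hi0, if_neg hi1]
        have e1 : i + 1 - h1.n = (i - h1.n) + 1 := by omega
        rw [e1]
        exact ⟨h2.k (i - h1.n), h2.piece (i - h1.n) (by omega)⟩

lemma reconstruct_nobreak (hp : IsDyadic p) (hq : IsDyadic q) (hpq : p < q)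
    (hc : ContinuousOn f (Icc p q))
    (hloc : ∀ t, p < t → t < q → ∃ k : ℤ, ∃ ε : ℝ, 0 < ε ∧
      ∀ s', t - ε ≤ s' → s' ≤ t + ε → f s' = f t + (2:ℝ) ^ k * (s' - t)) :
    ThompsonLike p q (f p) (f q) f := by
  obtain ⟨k, hk⟩ := affine_piece (le_refl p) hpq (le_refl q) hc hloc
  refine ⟨rfl, rfl, 1, one_pos, fun i => if i = 0 then p else q,
    by simp, by simp, ?_, ?_, ?_⟩
  · intro i hi
    have : i = 0 := by omega
    subst this
    simpa using hpq
  · intro i _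
    by_cases h0 : i = 0 <;> simp [h0, hp, hq]
  · intro i hi
    have : i = 0 := by omega
    subst this
    refine ⟨k, ?_⟩
    simpa using hk

lemma reconstruct (N : ℕ) : ∀ (S : Finset ℝ), S.card ≤ N → ∀ (p q : ℝ) (f : ℝ → ℝ),
    IsDyadic p → IsDyadic q → p < q → ContinuousOn f (Icc p q) →
    (∀ y ∈ S, IsDyadic y) →
    (∀ t, p < t → t < q → t ∉ S → ∃ k : ℤ, ∃ ε : ℝ, 0 < ε ∧
      ∀ s', t - ε ≤ s' → s' ≤ t + ε → f s' = f t + (2:ℝ) ^ k * (s' - t)) →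
    ThompsonLike p q (f p) (f q) f := by
  induction N with
  | zero =>
    intro S hcard p q f hp hq hpq hc _ hloc
    have : S = ∅ := Finset.card_eq_zero.mp (by omega)
    subst this
    exact reconstruct_nobreak hp hq hpq hc (fun t h1 h2 => hloc t h1 h2 (by simp))
  | succ N ih =>
    intro S hcard p q f hp hq hpq hc hSd hloc
    by_cases hex : ∃ y ∈ S, p < y ∧ y < q
    · obtain ⟨y, hyS, hpy, hyq⟩ := hex
      have hcard' : (S.erase y).card ≤ N := by
        have := Finset.card_erase_of_mem hyS
        omega
      have hyd : IsDyadic y := hSd y hyS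
      have hSd' : ∀ z ∈ S.erase y, IsDyadic z := fun z hz => hSd z (Finset.mem_of_mem_erase hz)
      have t1 : ThompsonLike p y (f p) (f y) f := by
        apply ih (S.erase y) hcard' p y f hp hyd hpy
          (hc.mono (Icc_subset_Icc (le_refl p) (le_of_lt hyq))) hSd'
        intro t h1 h2 ht
        apply hloc t h1 (lt_trans h2 hyq)
        intro htS
        exact ht (Finset.mem_erase.mpr ⟨ne_of_lt h2, htS⟩)
      have t2 : ThompsonLike y q (f y) (f q) f := by
        apply ih (S.erase y) hcard' y q f hyd hq hyq
          (hc.mono (Icc_subset_Icc (le_of_lt hpy) (le_refl q))) hSd'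
        intro t h1 h2 ht
        apply hloc t (lt_trans hpy h1) h2
        intro htS
        exact ht (Finset.mem_erase.mpr ⟨(ne_of_lt h1).symm, htS⟩)
      exact t1.tld.concat t2.tld
    · push_neg at hex
      apply reconstruct_nobreak hp hq hpq hc
      intro t h1 h2
      apply hloc t h1 h2
      intro htS
      exact absurd h2 (not_lt.mpr (hex t htS h1))

end ThompsonAux

namespace ThompsonAux
open Set Filter Topology

variable {p q r s u v w p' q' u' v' : ℝ} {f g : ℝ → ℝ}

lemma TLD.x_memIcc (h : TLD p q r s f) {i : ℕ} (hi : i ≤ h.n) : h.x i ∈ Icc p q := by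
  constructor
  · have := h.x_mono (Nat.zero_le i) hi; rwa [h.x0] at this
  · have := h.x_mono hi (le_refl _); rwa [h.xn] at this

lemma TL_congr (h : ThompsonLike p q r s f) (heq : ∀ t ∈ Icc p q, f t = g t) :
    ThompsonLike p q r s g := by
  have d := h.tld
  have hpq := d.pq
  refine ⟨?_, ?_, d.n, d.npos, d.x, d.x0, d.xn, d.mono, d.dyad, ?_⟩
  · rw [← heq p ⟨le_refl _, le_of_lt hpq⟩]; exact d.fp
  · rw [← heq q ⟨le_of_lt hpq, le_refl _⟩]; exact d.fq
  · intro i hi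
    refine ⟨d.k i, fun t ht => ?_⟩
    have hsub : Icc (d.x i) (d.x (i+1)) ⊆ Icc p q := by
      intro z hz
      have h1 := (d.x_memIcc (le_of_lt hi)).1
      have h2 := (d.x_memIcc (show i+1 ≤ d.n by omega)).2
      exact ⟨le_trans h1 hz.1, le_trans hz.2 h2⟩
    rw [← heq t (hsub ht), ← heq (d.x i) (hsub ⟨le_refl _, le_of_lt (d.mono i hi)⟩)]
    exact d.piece i hi t ht

lemma TL_id (hp : IsDyadic p) (hq : IsDyadic q) (hpq : p < q) :
    ThompsonLike p q p q (fun t => t) := by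
  refine ⟨rfl, rfl, 1, one_pos, fun i => if i = 0 then p else q, by simp, by simp, ?_, ?_, ?_⟩
  · intro i hi
    have : i = 0 := by omega
    subst this
    simpa using hpq
  · intro i _
    by_cases h0 : i = 0 <;> simp [h0, hp, hq]
  · intro i hi
    have : i = 0 := by omega
    subst this
    exact ⟨0, fun t _ => by simp⟩

lemma TLD.restrict (h : TLD p q r s f) (hu : IsDyadic u) (hv : IsDyadic v)
    (h1 : p ≤ u) (huv : u < v) (h2 : v ≤ q) :
    ThompsonLike u v (f u) (f v) f := by
  apply reconstruct h.breaks.card h.breaks (le_refl _) u v f hu hv huv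
    (h.continuousOn.mono (Icc_subset_Icc h1 h2)) h.breaks_dyad
  intro t ht1 ht2 htS
  exact h.window (lt_of_le_of_lt h1 ht1) (lt_of_lt_of_le ht2 h2) htS

lemma TLD.comp (hf : TLD p q r s f) (hg : TLD r s u' v' g)
    (hp : IsDyadic p) (hq : IsDyadic q) (hr : IsDyadic r) :
    ThompsonLike p q u' v' (g ∘ f) := by
  classical
  set T : Finset ℝ := hf.breaks ∪ (Finset.range (hg.n+1)).image
    (fun j => Function.invFunOn f (Icc p q) (hg.x j)) with hT
  have hTd : ∀ y ∈ T, IsDyadic y := by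
    intro y hy
    rcases Finset.mem_union.mp hy with h' | h'
    · exact hf.breaks_dyad y h'
    · obtain ⟨j, hj, rfl⟩ := Finset.mem_image.mp h'
      have hjn : j ≤ hg.n := by have := Finset.mem_range.mp hj; omega
      obtain ⟨t, htm, hft⟩ := hf.surjOn (hg.x_memIcc hjn)
      have hmem := Function.invFunOn_mem (f := f) (s := Icc p q) ⟨t, htm, hft⟩
      have heq := Function.invFunOn_eq (f := f) (s := Icc p q) ⟨t, htm, hft⟩
      exact hf.dyadic_preimage hr hmem (by rw [heq]; exact hg.dyad j hjn)
  have hcont : ContinuousOn (g ∘ f) (Icc p q) :=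
    hg.continuousOn.comp hf.continuousOn (fun t ht => hf.mapsTo ht)
  have key := reconstruct T.card T (le_refl _) p q (g ∘ f) hp hq hf.pq hcont hTd ?_
  · have e1 : (g ∘ f) p = u' := by rw [Function.comp_apply, hf.fp, hg.fp]
    have e2 : (g ∘ f) q = v' := by rw [Function.comp_apply, hf.fq, hg.fq]
    rwa [e1, e2] at key
  · intro t ht1 ht2 htT
    have htb : t ∉ hf.breaks := fun h' => htT (Finset.mem_union_left _ h')
    obtain ⟨k1, ε1, hε1, hw1⟩ := hf.window ht1 ht2 htb
    have hft : f t ∈ Ioo r s := by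
      have h1 := hf.strictMonoOn ⟨le_refl p, le_of_lt hf.pq⟩
        ⟨le_of_lt ht1, le_of_lt ht2⟩ ht1
      have h2 := hf.strictMonoOn ⟨le_of_lt ht1, le_of_lt ht2⟩
        ⟨le_of_lt hf.pq, le_refl q⟩ ht2
      rw [hf.fp] at h1; rw [hf.fq] at h2; exact ⟨h1, h2⟩
    have hftb : f t ∉ hg.breaks := by
      intro h'
      obtain ⟨j, hj, hxj⟩ := Finset.mem_image.mp h'
      apply htT
      apply Finset.mem_union_right
      apply Finset.mem_image.mpr
      refine ⟨j, hj, ?_⟩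
      rw [hxj]
      have hmem := Function.invFunOn_apply_mem (f := f)
        (show t ∈ Icc p q from ⟨le_of_lt ht1, le_of_lt ht2⟩)
      have heq := Function.invFunOn_apply_eq (f := f)
        (show t ∈ Icc p q from ⟨le_of_lt ht1, le_of_lt ht2⟩)
      exact hf.strictMonoOn.injOn hmem ⟨le_of_lt ht1, le_of_lt ht2⟩ heq
    obtain ⟨k2, ε2, hε2, hw2⟩ := hg.window hft.1 hft.2 hftb
    have hk1p := two_zpow_pos k1
    refine ⟨k1 + k2, min ε1 (ε2 / 2^k1), lt_min hε1 (by positivity), ?_⟩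
    intro s' hs1 hs2
    have hm1 := min_le_left ε1 (ε2 / 2^k1)
    have hm2 := min_le_right ε1 (ε2 / 2^k1)
    have hfs : f s' = f t + 2^k1 * (s' - t) := hw1 s' (by linarith) (by linarith)
    have hd1 : f t - ε2 ≤ f s' := by
      rw [hfs]
      have : -(ε2 / 2^k1) ≤ s' - t := by linarith
      have h2 : 2^k1 * (s' - t) ≥ 2^k1 * (-(ε2 / 2^k1)) :=
        mul_le_mul_of_nonneg_left this (le_of_lt hk1p)
      have h3 : 2^k1 * (-(ε2 / 2^k1)) = -ε2 := by field_simp; try ring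
      linarith
    have hd2 : f s' ≤ f t + ε2 := by
      rw [hfs]
      have : s' - t ≤ ε2 / 2^k1 := by linarith
      have h2 : 2^k1 * (s' - t) ≤ 2^k1 * (ε2 / 2^k1) :=
        mul_le_mul_of_nonneg_left this (le_of_lt hk1p)
      have h3 : 2^k1 * (ε2 / 2^k1) = ε2 := by field_simp; try ring
      linarith
    have := hw2 (f s') hd1 hd2
    show g (f s') = g (f t) + 2 ^ (k1 + k2) * (s' - t)
    rw [this, hfs]
    rw [← two_zpow_mul k1 k2]
    ring

lemma TLD.symm (G : Equiv.Perm ℝ) (h : TLD p q r s ⇑G) (hr : IsDyadic r) :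
    ThompsonLike r s p q ⇑G.symm := by
  refine ⟨?_, ?_, h.n, h.npos, fun i => G (h.x i), ?_, ?_, ?_, ?_, ?_⟩
  · rw [← h.fp]; exact G.symm_apply_apply p
  · rw [← h.fq]; exact G.symm_apply_apply q
  · show G (h.x 0) = r; rw [h.x0]; exact h.fp
  · show G (h.x h.n) = s; rw [h.xn]; exact h.fq
  · intro i hi
    exact h.strictMonoOn (h.x_memIcc (by omega)) (h.x_memIcc (by omega)) (h.mono i hi)
  · intro i hi
    exact h.anchor_dyad hr i hi
  · intro i hi
    refine ⟨-(h.k i), fun t ht => ?_⟩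
    have hk := two_zpow_pos (h.k i)
    have hkn := two_zpow_pos (-(h.k i))
    have hmul := two_zpow_mul (h.k i) (-(h.k i))
    rw [add_neg_cancel, zpow_zero] at hmul
    set uu := h.x i + (2:ℝ)^(-(h.k i)) * (t - G (h.x i)) with huu
    have hfx : G (h.x (i+1)) = G (h.x i) + 2^(h.k i) * (h.x (i+1) - h.x i) :=
      h.piece i hi _ ⟨le_of_lt (h.mono i hi), le_refl _⟩
    have huin : uu ∈ Icc (h.x i) (h.x (i+1)) := by
      constructor
      · have : 0 ≤ (2:ℝ)^(-(h.k i)) * (t - G (h.x i)) :=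
          mul_nonneg (le_of_lt hkn) (by linarith [ht.1])
        rw [huu]; linarith
      · have h1 : t - G (h.x i) ≤ 2^(h.k i) * (h.x (i+1) - h.x i) := by
          linarith [ht.2, hfx]
        have h2 : (2:ℝ)^(-(h.k i)) * (t - G (h.x i)) ≤
            2^(-(h.k i)) * (2^(h.k i) * (h.x (i+1) - h.x i)) :=
          mul_le_mul_of_nonneg_left h1 (le_of_lt hkn)
        have h3 : (2:ℝ)^(-(h.k i)) * (2^(h.k i) * (h.x (i+1) - h.x i)) =
            h.x (i+1) - h.x i := by
          rw [← mul_assoc, mul_comm ((2:ℝ)^(-(h.k i))), hmul, one_mul]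
        rw [huu]; linarith
    have hGu : G uu = t := by
      rw [h.piece i hi uu huin, huu]
      have : h.x i + (2:ℝ)^(-(h.k i)) * (t - G (h.x i)) - h.x i =
          2^(-(h.k i)) * (t - G (h.x i)) := by ring
      rw [this, ← mul_assoc, hmul, one_mul]
      ring
    have : G.symm t = uu := by rw [← hGu]; exact G.symm_apply_apply uu
    rw [this, G.symm_apply_apply, huu]

lemma TL_glue (h1 : ThompsonLike p q r s f) (h2 : ThompsonLike q w s v g) :
    ThompsonLike p w r v (fun t => if t ≤ q then f t else g t) := by
  have d1 := h1.tld
  have d2 := h2.tld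
  have e1 : ThompsonLike p q r s (fun t => if t ≤ q then f t else g t) :=
    TL_congr h1 (fun t ht => by simp [ht.2])
  have e2 : ThompsonLike q w s v (fun t => if t ≤ q then f t else g t) := by
    apply TL_congr h2
    intro t ht
    by_cases htq : t ≤ q
    · have htq' : t = q := le_antisymm htq ht.1
      rw [htq']
      simp only [if_pos (le_refl q)]
      rw [d2.fp, d1.fq]
    · simp [htq]
  exact e1.tld.concat e2.tld

lemma exists_perm (hd : TLD p q p q f) (hout : ∀ t, t ∉ Icc p q → f t = t) :
    ∃ G : Equiv.Perm ℝ, ⇑G = f := by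
  have hmt : ∀ t, t ∈ Icc p q → f t ∈ Icc p q := fun t ht => hd.mapsTo ht
  have hinj : Function.Injective f := by
    intro a b hab
    by_cases haI : a ∈ Icc p q <;> by_cases hbI : b ∈ Icc p q
    · exact hd.strictMonoOn.injOn haI hbI hab
    · exfalso; rw [hout b hbI] at hab; rw [← hab] at hbI; exact hbI (hmt a haI)
    · exfalso; rw [hout a haI] at hab; rw [hab] at haI; exact haI (hmt b hbI)
    · rw [hout a haI, hout b hbI] at hab; exact hab
  have hsurj : Function.Surjective f := by
    intro y
    by_cases hyI : y ∈ Icc p q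
    · obtain ⟨t, htm, hft⟩ := hd.surjOn hyI
      exact ⟨t, hft⟩
    · exact ⟨y, hout y hyI⟩
  exact ⟨Equiv.ofBijective f ⟨hinj, hsurj⟩, rfl⟩

end ThompsonAux

namespace ThompsonAux
open Set Filter Topology

variable {p q r s u v w : ℝ} {f g : ℝ → ℝ}

lemma TL_affine (hp : IsDyadic p) (hq : IsDyadic q) (hpq : p < q) (k : ℤ) (c : ℝ)
    (hr : (2:ℝ)^k * p + c = r) (hs : (2:ℝ)^k * q + c = s) :
    ThompsonLike p q r s (fun t => (2:ℝ)^k * t + c) := by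
  refine ⟨hr, hs, 1, one_pos, fun i => if i = 0 then p else q, by simp, by simp, ?_, ?_, ?_⟩
  · intro i hi
    have : i = 0 := by omega
    subst this
    simpa using hpq
  · intro i _
    by_cases h0 : i = 0 <;> simp [h0, hp, hq]
  · intro i hi
    have : i = 0 := by omega
    subst this
    refine ⟨k, fun t _ => by simp; ring⟩

lemma nat_dyadic (m : ℕ) : IsDyadic (m : ℝ) := ⟨m, 0, by simp⟩

lemma phi_exists : ∀ l : ℕ, 1 ≤ l → ∃ f : ℝ → ℝ, ThompsonLike 0 1 0 (l:ℝ) f := by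
  intro l
  induction l with
  | zero => omega
  | succ l ih =>
    intro _
    rcases Nat.eq_zero_or_pos l with rfl | hl
    · exact ⟨fun t => t, by simpa using TL_id ⟨0,0, by simp⟩ ⟨1,0, by simp⟩ one_pos⟩
    · obtain ⟨f, hf⟩ := ih hl
      have hhalf : IsDyadic (1/2 : ℝ) := ⟨1, 1, by norm_num⟩
      have h0d : IsDyadic (0:ℝ) := ⟨0, 0, by simp⟩
      have h1d : IsDyadic (1:ℝ) := ⟨1, 0, by simp⟩
      have hld : IsDyadic (l:ℝ) := nat_dyadic l
      have hlpos : (0:ℝ) < l := by exact_mod_cast hl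
      -- shift : TL (1/2) 1 0 1 (2t - 1)
      have hshift : ThompsonLike (1/2) 1 0 1 (fun t => (2:ℝ)^(1:ℤ) * t + (-1)) :=
        TL_affine hhalf h1d (by norm_num) 1 (-1) (by norm_num) (by norm_num)
      -- comp1 : TL (1/2) 1 0 l
      have hcomp1 : ThompsonLike (1/2) 1 0 (l:ℝ) (f ∘ fun t => (2:ℝ)^(1:ℤ) * t + (-1)) :=
        TLD.comp hshift.tld hf.tld hhalf h1d h0d
      -- plus1 : TL 0 l 1 (l+1)
      have hplus : ThompsonLike 0 (l:ℝ) 1 ((l:ℝ)+1) (fun t => (2:ℝ)^(0:ℤ) * t + 1) :=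
        TL_affine h0d hld hlpos 0 1 (by norm_num) (by norm_num)
      have hcomp2 : ThompsonLike (1/2) 1 1 ((l:ℝ)+1)
          ((fun t => (2:ℝ)^(0:ℤ) * t + 1) ∘ (f ∘ fun t => (2:ℝ)^(1:ℤ) * t + (-1))) :=
        TLD.comp hcomp1.tld hplus.tld hhalf h1d h0d
      -- double : TL 0 (1/2) 0 1 (2t)
      have hdouble : ThompsonLike 0 (1/2) 0 1 (fun t => (2:ℝ)^(1:ℤ) * t + 0) :=
        TL_affine h0d hhalf (by norm_num) 1 0 (by norm_num) (by norm_num)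
      have hglue := TL_glue hdouble hcomp2
      have hcast : ((l+1 : ℕ) : ℝ) = (l:ℝ) + 1 := by push_cast; ring
      exact ⟨_, hcast.symm ▸ hglue⟩

lemma TL_inv_exists (h : ThompsonLike p q r s f) (hr : IsDyadic r) :
    ∃ g : ℝ → ℝ, ThompsonLike r s p q g := by
  classical
  have d := h.tld
  set g : ℝ → ℝ := Function.invFunOn f (Icc p q) with hgdef
  have hgf : ∀ t ∈ Icc p q, g (f t) = t := fun t ht =>
    d.strictMonoOn.injOn (Function.invFunOn_apply_mem ht) ht (Function.invFunOn_apply_eq ht)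
  refine ⟨g, ?_, ?_, d.n, d.npos, fun i => f (d.x i), ?_, ?_, ?_, ?_, ?_⟩
  · rw [← d.fp]; exact hgf p ⟨le_refl _, le_of_lt d.pq⟩
  · rw [← d.fq]; exact hgf q ⟨le_of_lt d.pq, le_refl _⟩
  · show f (d.x 0) = r; rw [d.x0, d.fp]
  · show f (d.x d.n) = s; rw [d.xn, d.fq]
  · intro i hi
    exact d.strictMonoOn (d.x_memIcc (by omega)) (d.x_memIcc (by omega)) (d.mono i hi)
  · intro i hi
    exact d.anchor_dyad hr i hi
  · intro i hi
    refine ⟨-(d.k i), fun t ht => ?_⟩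
    have hk := two_zpow_pos (d.k i)
    have hkn := two_zpow_pos (-(d.k i))
    have hmul := two_zpow_mul (d.k i) (-(d.k i))
    rw [add_neg_cancel, zpow_zero] at hmul
    set uu := d.x i + (2:ℝ)^(-(d.k i)) * (t - f (d.x i)) with huu
    have hfx : f (d.x (i+1)) = f (d.x i) + 2^(d.k i) * (d.x (i+1) - d.x i) :=
      d.piece i hi _ ⟨le_of_lt (d.mono i hi), le_refl _⟩
    have huin : uu ∈ Icc (d.x i) (d.x (i+1)) := by
      constructor
      · have : 0 ≤ (2:ℝ)^(-(d.k i)) * (t - f (d.x i)) :=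
          mul_nonneg (le_of_lt hkn) (by linarith [ht.1])
        rw [huu]; linarith
      · have h1 : t - f (d.x i) ≤ 2^(d.k i) * (d.x (i+1) - d.x i) := by
          linarith [ht.2, hfx]
        have h2 : (2:ℝ)^(-(d.k i)) * (t - f (d.x i)) ≤
            2^(-(d.k i)) * (2^(d.k i) * (d.x (i+1) - d.x i)) :=
          mul_le_mul_of_nonneg_left h1 (le_of_lt hkn)
        have h3 : (2:ℝ)^(-(d.k i)) * (2^(d.k i) * (d.x (i+1) - d.x i)) =
            d.x (i+1) - d.x i := by
          rw [← mul_assoc, mul_comm ((2:ℝ)^(-(d.k i))), hmul, one_mul]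
        rw [huu]; linarith
    have hfu : f uu = t := by
      rw [d.piece i hi uu huin, huu]
      have : d.x i + (2:ℝ)^(-(d.k i)) * (t - f (d.x i)) - d.x i =
          2^(-(d.k i)) * (t - f (d.x i)) := by ring
      rw [this, ← mul_assoc, hmul, one_mul]
      ring
    have hsub : Icc (d.x i) (d.x (i+1)) ⊆ Icc p q := by
      intro z hz
      exact ⟨le_trans (d.x_memIcc (by omega : i ≤ d.n)).1 hz.1,
        le_trans hz.2 (d.x_memIcc (by omega : i+1 ≤ d.n)).2⟩
    have : g t = uu := by rw [← hfu]; exact hgf uu (hsub huin)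
    rw [this, hgf (d.x i) (hsub ⟨le_refl _, le_of_lt (d.mono i hi)⟩), huu]

lemma pos_dyadic_num {x : ℝ} (hx : IsDyadic x) (hpos : 0 < x) :
    ∃ (a : ℕ) (N : ℕ), 1 ≤ a ∧ x = (a:ℝ) / 2 ^ N := by
  obtain ⟨z, N, hz⟩ := hx
  have h2 : (0:ℝ) < 2 ^ N := by positivity
  have hzpos : 0 < z := by
    by_contra hc
    push_neg at hc
    have : (z:ℝ) ≤ 0 := by exact_mod_cast hc
    have : x ≤ 0 := by rw [hz]; exact div_nonpos_of_nonpos_of_nonneg this (le_of_lt h2)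
    linarith
  refine ⟨z.toNat, N, by omega, ?_⟩
  rw [hz]
  congr 1
  exact_mod_cast (Int.toNat_of_nonneg (by omega)).symm

lemma exists_TL (hp : IsDyadic p) (hq : IsDyadic q) (hr : IsDyadic r) (hs : IsDyadic s)
    (hpq : p < q) (hrs : r < s) : ∃ f : ℝ → ℝ, ThompsonLike p q r s f := by
  obtain ⟨a, N, ha1, haN⟩ := pos_dyadic_num (dyadic_sub hq hp) (by linarith)
  obtain ⟨b, M, hb1, hbM⟩ := pos_dyadic_num (dyadic_sub hs hr) (by linarith)
  have h0d : IsDyadic (0:ℝ) := ⟨0, 0, by simp⟩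
  have h1d : IsDyadic (1:ℝ) := ⟨1, 0, by simp⟩
  have h2N : (0:ℝ) < 2 ^ N := by positivity
  have h2M : (0:ℝ) < 2 ^ M := by positivity
  have hapos : (0:ℝ) < a := by exact_mod_cast ha1
  have hbpos : (0:ℝ) < b := by exact_mod_cast hb1
  -- A1 : TL p q 0 a
  have hA1 : ThompsonLike p q 0 (a:ℝ) (fun t => (2:ℝ)^(N:ℤ) * t + (-((2:ℝ)^(N:ℤ) * p))) := by
    apply TL_affine hp hq hpq (N:ℤ) _ (by ring) ?_
    have hz : (2:ℝ)^(N:ℤ) = 2 ^ N := by rw [zpow_natCast]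
    rw [hz]
    have : q - p = (a:ℝ) / 2 ^ N := haN
    field_simp at this ⊢
    linarith
  -- psi : TL 0 a 0 1
  obtain ⟨φa, hφa⟩ := phi_exists a ha1
  obtain ⟨ψ, hψ⟩ := TL_inv_exists hφa h0d
  -- φb : TL 0 1 0 b
  obtain ⟨φb, hφb⟩ := phi_exists b hb1
  -- A2 : TL 0 b r s
  have hA2 : ThompsonLike 0 (b:ℝ) r s (fun t => (2:ℝ)^(-(M:ℤ)) * t + r) := by
    apply TL_affine h0d (nat_dyadic b) hbpos (-(M:ℤ)) r (by ring) ?_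
    have hz : (2:ℝ)^(-(M:ℤ)) = ((2:ℝ) ^ M)⁻¹ := by
      rw [zpow_neg, zpow_natCast]
    rw [hz]
    have : s - r = (b:ℝ) / 2 ^ M := hbM
    field_simp at this ⊢
    linarith
  have c1 := TLD.comp hA1.tld hψ.tld hp hq h0d
  have c2 := TLD.comp c1.tld hφb.tld hp hq h0d
  have c3 := TLD.comp c2.tld hA2.tld hp hq h0d
  exact ⟨_, c3⟩

end ThompsonAux

namespace ThompsonAux
open Set Filter Topology

variable {p q p' q' : ℝ} {G H : Equiv.Perm ℝ}

lemma InF_one (hp : IsDyadic p) (hq : IsDyadic q) (hpq : p < q) : InF p q 1 :=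
  ⟨TL_congr (TL_id hp hq hpq) (fun t _ => rfl), fun x _ => rfl⟩

lemma InF_mul (hp : IsDyadic p) (hq : IsDyadic q) (hG : InF p q G) (hH : InF p q H) :
    InF p q (G * H) := by
  constructor
  · have := TLD.comp hH.1.tld hG.1.tld hp hq hp
    apply TL_congr this
    intro t _
    simp [Equiv.Perm.mul_apply]
  · intro x hx
    rw [Equiv.Perm.mul_apply, hH.2 x hx, hG.2 x hx]

lemma InF_inv (hp : IsDyadic p) (hG : InF p q G) : InF p q G⁻¹ := by
  constructor
  · have := TLD.symm G hG.1.tld hp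
    apply TL_congr this
    intro t _
    rfl
  · intro x hx
    have h1 := hG.2 x hx
    have : G.symm (G x) = G.symm x := by rw [h1]
    rw [Equiv.symm_apply_apply] at this
    show G.symm x = x
    exact this.symm

lemma InF_mono (hp' : IsDyadic p') (hp : IsDyadic p) (hq : IsDyadic q) (hq' : IsDyadic q')
    (h1 : p' ≤ p) (h2 : q ≤ q') (hG : InF p q G) : InF p' q' G := by
  have hpq : p < q := hG.1.tld.pq
  have step1 : ThompsonLike p' q p' q ⇑G := by
    rcases eq_or_lt_of_le h1 with he | h1'
    · rw [he]; exact hG.1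
    · have hglue := TL_glue (TL_id hp' hp h1') hG.1
      apply TL_congr hglue
      intro t ht
      by_cases htp : t ≤ p
      · simp only [if_pos htp]
        rcases eq_or_lt_of_le htp with he2 | hlt
        · rw [he2]; exact hG.1.1.symm
        · exact (hG.2 t (fun hmem => absurd hmem.1 (not_le.mpr hlt))).symm
      · simp only [if_neg htp]
  have step2 : ThompsonLike p' q' p' q' ⇑G := by
    rcases eq_or_lt_of_le h2 with he | h2'
    · rw [← he]; exact step1
    · have hglue := TL_glue step1 (TL_id hq hq' h2')
      apply TL_congr hglue
      intro t ht
      by_cases htq : t ≤ q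
      · simp only [if_pos htq]
      · simp only [if_neg htq]
        exact (hG.2 t (fun hmem => absurd hmem.2 (not_le.mpr (not_le.mp htq)))).symm
  refine ⟨step2, fun x hx => hG.2 x ?_⟩
  intro hmem
  exact hx ⟨le_trans h1 hmem.1, le_trans hmem.2 h2⟩

/-- If `G ∈ F_{[p,q]}` fixes `[c,q]` pointwise, then `G ∈ F_{[p,c]}`. -/
lemma InF_truncate (hp : IsDyadic p) (hc : IsDyadic p') (hG : InF p q G)
    (h1 : p < p') (h2 : p' ≤ q) (hfix : ∀ t, p' ≤ t → t ≤ q → G t = t) :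
    InF p p' G := by
  constructor
  · have hres := hG.1.tld.restrict hp hc (le_refl p) h1 h2
    rw [show (⇑G p) = p from hG.1.1, show (⇑G p') = p' from hfix p' (le_refl _) h2] at hres
    exact hres
  · intro x hx
    simp only [mem_Icc, not_and_or, not_le] at hx
    rcases hx with hx | hx
    · exact hG.2 x (fun hmem => absurd hmem.1 (not_le.mpr hx))
    · by_cases hxq : x ≤ q
      · exact hfix x (le_of_lt hx) hxq
      · exact hG.2 x (fun hmem => absurd hmem.2 hxq)

end ThompsonAux

namespace ThompsonAux
open Set Filter Topology

lemma mk_InF_perm {p q : ℝ} {f : ℝ → ℝ} (h : ThompsonLike p q p q f) :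
    ∃ P : Equiv.Perm ℝ, InF p q P ∧ ∀ t ∈ Set.Icc p q, ⇑P t = f t := by
  classical
  set F : ℝ → ℝ := fun t => if t < p ∨ q < t then t else f t with hF
  have heq : ∀ t ∈ Set.Icc p q, f t = F t := by
    intro t ht
    simp only [hF]
    rw [if_neg (by push_neg; exact ⟨ht.1, ht.2⟩)]
  have hTL : ThompsonLike p q p q F := TL_congr h heq
  have hout : ∀ t, t ∉ Set.Icc p q → F t = t := by
    intro t ht
    simp only [hF]
    rw [if_pos]
    simp only [Set.mem_Icc, not_and_or, not_le] at ht
    tauto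
  obtain ⟨P, hP⟩ := exists_perm hTL.tld hout
  exact ⟨P, ⟨by rw [hP]; exact hTL, fun x hx => by rw [hP]; exact hout x hx⟩,
    fun t ht => by rw [hP]; exact (heq t ht).symm⟩

end ThompsonAux


open ThompsonAux in
theorem statement4 (a b c d : ℝ) (ha : IsDyadic a) (hb : IsDyadic b)
    (hc : IsDyadic c) (hd : IsDyadic d) (hab : a < b) (hbc : b < c) (hcd : c < d)
    (h0 : 0 ≤ a) (h1 : d ≤ 1) :
    (Subgroup.closure ({g | InF a c g} ∪ {g | InF b d g}) : Set (Equiv.Perm ℝ)) =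
      {g | InF a d g} := by
  classical
  have had : a < d := by linarith
  have hac : a < c := by linarith
  have hbd : b < d := by linarith
  set gens : Set (Equiv.Perm ℝ) := {g | InF a c g} ∪ {g | InF b d g} with hgens
  -- KEY LEMMA
  have key : ∀ g : Equiv.Perm ℝ, InF a d g → ∀ r', IsDyadic r' → b < r' → r' < c →
      b < g r' → g r' < c → g ∈ Subgroup.closure gens := by
    intro g hg r' hr'd hbr' hr'c hbgr' hgr'c
    have hgr'dy : IsDyadic (g r') :=
      hg.1.tld.dyadic_map ha ⟨by linarith, by linarith⟩ hr'd
    obtain ⟨f0, hf0⟩ := exists_TL hb hr'd hb hgr'dy hbr' hbgr'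
    have hres : ThompsonLike r' d (⇑g r') (⇑g d) ⇑g :=
      hg.1.tld.restrict hr'd hd (by linarith) (by linarith) (le_refl d)
    rw [show (⇑g d) = d from hg.1.2.1] at hres
    have hglue := TL_glue hf0 hres
    obtain ⟨P, hPInF, hPeq⟩ := mk_InF_perm hglue
    have hPg : ∀ t, r' ≤ t → t ≤ d → ⇑P t = ⇑g t := by
      intro t h1t h2t
      rw [hPeq t ⟨by linarith, h2t⟩]
      by_cases htr : t ≤ r'
      · have he : t = r' := le_antisymm htr h1t
        simp only [if_pos htr]
        rw [he]
        exact hf0.2.1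
      · simp only [if_neg htr]
    have hfix : ∀ t, ⇑g r' ≤ t → t ≤ d → ⇑(g * P⁻¹) t = t := by
      intro t h1t h2t
      obtain ⟨t2, ht2m, ht2e⟩ := hres.tld.surjOn ⟨h1t, h2t⟩
      have hPt2 : ⇑P t2 = t := by rw [hPg t2 ht2m.1 ht2m.2, ht2e]
      have hinv : ⇑P⁻¹ t = t2 := by rw [← hPt2]; exact P.symm_apply_apply t2
      rw [Equiv.Perm.mul_apply, hinv, ht2e]
    have hg1ad : InF a d (g * P⁻¹) :=
      InF_mul ha hd hg (InF_inv ha (InF_mono ha hb hd hd (le_of_lt hab) (le_refl d) hPInF))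
    have hg1ac : InF a c (g * P⁻¹) := by
      apply InF_truncate ha hc hg1ad hac (le_of_lt hcd)
      intro t h1t h2t
      exact hfix t (by linarith) h2t
    have hgfact : g = (g * P⁻¹) * P := by group
    rw [hgfact]
    exact Subgroup.mul_mem _
      (Subgroup.subset_closure ((Set.mem_union _ _ _).mpr (Or.inl hg1ac)))
      (Subgroup.subset_closure ((Set.mem_union _ _ _).mpr (Or.inr hPInF)))
  -- LEMMA A : the case g c ≤ b
  have lemA : ∀ g : Equiv.Perm ℝ, InF a d g → ⇑g c ≤ b → g ∈ Subgroup.closure gens := by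
    intro g hg hgcb
    have dG := hg.1.tld
    have dGi := (InF_inv ha hg).1.tld
    have hbI : b ∈ Set.Icc a d := ⟨by linarith, by linarith⟩
    have hcI : c ∈ Set.Icc a d := ⟨by linarith, by linarith⟩
    have hdI : d ∈ Set.Icc a d := ⟨by linarith, le_refl d⟩
    have hgcI : ⇑g c ∈ Set.Icc a d := dG.mapsTo hcI
    have hginvbI : ⇑g⁻¹ b ∈ Set.Icc a d := dGi.mapsTo hbI
    have hginvcI : ⇑g⁻¹ c ∈ Set.Icc a d := dGi.mapsTo hcI
    have h1 : c ≤ ⇑g⁻¹ b := by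
      have := dGi.strictMonoOn.monotoneOn hgcI hbI hgcb
      rwa [show (⇑g⁻¹ (⇑g c)) = c from g.symm_apply_apply c] at this
    have h2 : ⇑g⁻¹ b < ⇑g⁻¹ c := dGi.strictMonoOn hbI hcI hbc
    have h3 : ⇑g⁻¹ c < d := by
      have := dGi.strictMonoOn hcI hdI hcd
      rwa [show (⇑g⁻¹ d) = d from dGi.fq] at this
    obtain ⟨r', hr'd, hbr', hr'c⟩ := dyadic_dense hbc
    obtain ⟨q2, hq2d, hq2l, hq2r⟩ := dyadic_dense h2
    have hginvb1 : a ≤ ⇑g⁻¹ b := hginvbI.1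
    have hbq2 : b < q2 := by linarith
    have hq2dd : q2 < d := by linarith
    have hr'q2 : r' < q2 := by linarith
    obtain ⟨f1, hf1⟩ := exists_TL hb hr'd hb hq2d hbr' hbq2
    obtain ⟨f2, hf2⟩ := exists_TL hr'd hd hq2d hd (by linarith) hq2dd
    have hglue := TL_glue hf1 hf2
    obtain ⟨P, hPInF, hPeq⟩ := mk_InF_perm hglue
    have hPr' : ⇑P r' = q2 := by
      rw [hPeq r' ⟨le_of_lt hbr', by linarith⟩]
      simp only [if_pos (le_refl r')]
      exact hf1.2.1
    have hg' : InF a d (g * P) :=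
      InF_mul ha hd hg (InF_mono ha hb hd hd (le_of_lt hab) (le_refl d) hPInF)
    have hval : ⇑(g * P) r' = ⇑g q2 := by rw [Equiv.Perm.mul_apply, hPr']
    have hq2I : q2 ∈ Set.Icc a d := ⟨by linarith, by linarith⟩
    have hgq2b : b < ⇑g q2 := by
      have := dG.strictMonoOn hginvbI hq2I hq2l
      rwa [show (⇑g (⇑g⁻¹ b)) = b from g.apply_symm_apply b] at this
    have hgq2c : ⇑g q2 < c := by
      have := dG.strictMonoOn hq2I hginvcI hq2r
      rwa [show (⇑g (⇑g⁻¹ c)) = c from g.apply_symm_apply c] at this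
    have hmem' := key (g * P) hg' r' hr'd hbr' hr'c
      (by rw [hval]; exact hgq2b) (by rw [hval]; exact hgq2c)
    have hmemP : P ∈ Subgroup.closure gens :=
      Subgroup.subset_closure ((Set.mem_union _ _ _).mpr (Or.inr hPInF))
    have hgfact : g = (g * P) * P⁻¹ := by group
    rw [hgfact]
    exact Subgroup.mul_mem _ hmem' (Subgroup.inv_mem _ hmemP)
  -- MAIN (⊇)
  have main : ∀ g : Equiv.Perm ℝ, InF a d g → g ∈ Subgroup.closure gens := by
    intro g hg
    by_cases hcase : ∃ r', IsDyadic r' ∧ b < r' ∧ r' < c ∧ b < ⇑g r' ∧ ⇑g r' < c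
    · obtain ⟨r', k1, k2, k3, k4, k5⟩ := hcase
      exact key g hg r' k1 k2 k3 k4 k5
    · push_neg at hcase
      have dG := hg.1.tld
      have dGi := (InF_inv ha hg).1.tld
      have hbI : b ∈ Set.Icc a d := ⟨by linarith, by linarith⟩
      have hcI : c ∈ Set.Icc a d := ⟨by linarith, by linarith⟩
      have hdichot : ⇑g c ≤ b ∨ c ≤ ⇑g b := by
        by_contra hcon
        push_neg at hcon
        obtain ⟨hcon1, hcon2⟩ := hcon
        have hgbI : ⇑g b ∈ Set.Icc a d := dG.mapsTo hbI
        have hgcI : ⇑g c ∈ Set.Icc a d := dG.mapsTo hcI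
        have hinvbI : ⇑g⁻¹ b ∈ Set.Icc a d := dGi.mapsTo hbI
        have hinvcI : ⇑g⁻¹ c ∈ Set.Icc a d := dGi.mapsTo hcI
        have e1 : b < ⇑g⁻¹ c := by
          have := dGi.strictMonoOn hgbI hcI hcon2
          rwa [show (⇑g⁻¹ (⇑g b)) = b from g.symm_apply_apply b] at this
        have e2 : ⇑g⁻¹ b < c := by
          have := dGi.strictMonoOn hbI hgcI hcon1
          rwa [show (⇑g⁻¹ (⇑g c)) = c from g.symm_apply_apply c] at this
        have hlohi : max b (⇑g⁻¹ b) < min c (⇑g⁻¹ c) :=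
          max_lt (lt_min hbc e1) (lt_min e2 (dGi.strictMonoOn hbI hcI hbc))
        obtain ⟨r', hr'd, hr'lo, hr'hi⟩ := dyadic_dense hlohi
        have hbr' : b < r' := lt_of_le_of_lt (le_max_left _ _) hr'lo
        have hr'c : r' < c := lt_of_lt_of_le hr'hi (min_le_left _ _)
        have hr'I : r' ∈ Set.Icc a d := ⟨by linarith, by linarith⟩
        have hgr'b : b < ⇑g r' := by
          have hx := dG.strictMonoOn hinvbI hr'I (lt_of_le_of_lt (le_max_right _ _) hr'lo)
          rwa [show (⇑g (⇑g⁻¹ b)) = b from g.apply_symm_apply b] at hx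
        have hgr'c : ⇑g r' < c := by
          have hx := dG.strictMonoOn hr'I hinvcI (lt_of_lt_of_le hr'hi (min_le_right _ _))
          rwa [show (⇑g (⇑g⁻¹ c)) = c from g.apply_symm_apply c] at hx
        exact absurd (hcase r' hr'd hbr' hr'c hgr'b) (not_le.mpr hgr'c)
      rcases hdichot with hca | hcb
      · exact lemA g hg hca
      · have hsymm : ⇑g⁻¹ c ≤ b := by
          have hgbI : ⇑g b ∈ Set.Icc a d := dG.mapsTo hbI
          have := dGi.strictMonoOn.monotoneOn hcI hgbI hcb
          rwa [show (⇑g⁻¹ (⇑g b)) = b from g.symm_apply_apply b] at this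
        have hmem := lemA g⁻¹ (InF_inv ha hg) hsymm
        have h2 := Subgroup.inv_mem _ hmem
        rwa [inv_inv] at h2
  apply Set.Subset.antisymm
  · intro g hg
    induction hg using Subgroup.closure_induction with
    | mem x hx =>
      rcases hx with hx | hx
      · exact InF_mono ha ha hc hd (le_refl a) (le_of_lt hcd) hx
      · exact InF_mono ha hb hd hd (le_of_lt hab) (le_refl d) hx
    | one => exact InF_one ha hd had
    | mul x y hx hy ihx ihy => exact InF_mul ha hd ihx ihy
    | inv x hx ih => exact InF_inv ha ih
  · intro g hg
    exact main g hg

end
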